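/- Fix c ∈ ℝ with c ≠ 0 and c ≠ −1, and for h near c (h ≠ c) define x(h) = (c − h)(h + 1)/(c − 2h − h²)² and y(h) = (c − 2h − h²)²(c − h − h²)/(c − h)². Then |Q(x(h), y(h))| tends to +∞ as h tends to c; i.e., Q has a pole along the level curve P = c as h → c. -/

import Mathlib

open Filter

/-- `t = xy − 1`. -/
noncomputable def tF (x y : ℝ) : ℝ := x * y - 1

/-- `h = t(xt + 1)`. -/
noncomputable def hF (x y : ℝ) : ℝ := tF x y * (x * tF x y + 1)

/-- `f = (xt + 1)²(t² + y)`. -/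
noncomputable def fF (x y : ℝ) : ℝ := (x * tF x y + 1) ^ 2 * (tF x y ^ 2 + y)

/-- The auxiliary polynomial `u(f,h)`. -/
noncomputable def uF (f h : ℝ) : ℝ :=
  170 * f * h + 91 * h ^ 2 + 195 * f * h ^ 2 + 69 * h ^ 3 + 75 * f * h ^ 3 + (75 / 4) * h ^ 4

/-- `Q = −t² − 6th(h + 1) − u(f,h)`. -/
noncomputable def QF (x y : ℝ) : ℝ :=
  -tF x y ^ 2 - 6 * tF x y * hF x y * (hF x y + 1) - uF (fF x y) (hF x y)

/-- The value of `t` along the level curve, as a function of the parameter `h`. -/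
noncomputable def TT (c h : ℝ) : ℝ := ((h + 1) * (c - h - h ^ 2) - (c - h)) / (c - h)

lemma tF_on_curve (c h : ℝ) (hD : c - 2 * h - h ^ 2 ≠ 0) (hch : c - h ≠ 0) :
    tF ((c - h) * (h + 1) / (c - 2 * h - h ^ 2) ^ 2)
       ((c - 2 * h - h ^ 2) ^ 2 * (c - h - h ^ 2) / (c - h) ^ 2) = TT c h := by
  unfold tF TT
  have hD2 : c - h * 2 - h ^ 2 ≠ 0 := by rwa [mul_comm h 2]
  field_simp

lemma hF_on_curve (c h : ℝ) (hD : c - 2 * h - h ^ 2 ≠ 0) (hch : c - h ≠ 0) :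
    hF ((c - h) * (h + 1) / (c - 2 * h - h ^ 2) ^ 2)
       ((c - 2 * h - h ^ 2) ^ 2 * (c - h - h ^ 2) / (c - h) ^ 2) = h := by
  unfold hF
  rw [tF_on_curve c h hD hch]
  unfold TT
  have hD2 : c - h * 2 - h ^ 2 ≠ 0 := by rwa [mul_comm h 2]
  field_simp
  ring

lemma fF_on_curve (c h : ℝ) (hD : c - 2 * h - h ^ 2 ≠ 0) (hch : c - h ≠ 0) :
    fF ((c - h) * (h + 1) / (c - 2 * h - h ^ 2) ^ 2)
       ((c - 2 * h - h ^ 2) ^ 2 * (c - h - h ^ 2) / (c - h) ^ 2) = c - h := by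
  unfold fF
  rw [tF_on_curve c h hD hch]
  unfold TT
  have hD2 : c - h * 2 - h ^ 2 ≠ 0 := by rwa [mul_comm h 2]
  field_simp
  ring

lemma QF_on_curve (c h : ℝ) (hD : c - 2 * h - h ^ 2 ≠ 0) (hch : c - h ≠ 0) :
    QF ((c - h) * (h + 1) / (c - 2 * h - h ^ 2) ^ 2)
       ((c - 2 * h - h ^ 2) ^ 2 * (c - h - h ^ 2) / (c - h) ^ 2)
      = -(TT c h + 3 * (h * (h + 1))) ^ 2
          + (9 * (h * (h + 1)) ^ 2 - uF (c - h) h) := by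
  unfold QF
  rw [tF_on_curve c h hD hch, hF_on_curve c h hD hch, fF_on_curve c h hD hch]
  ring

/-- Along the level curve `P = c` (for `c ≠ 0, −1`), `Q` has a pole as the
parameter `h` tends to `c`. -/
theorem pinchuk_Q_pole_along_level_curve (c : ℝ) (hc0 : c ≠ 0) (hc1 : c ≠ -1) :
    Tendsto
      (fun h : ℝ =>
        |QF ((c - h) * (h + 1) / (c - 2 * h - h ^ 2) ^ 2)
            ((c - 2 * h - h ^ 2) ^ 2 * (c - h - h ^ 2) / (c - h) ^ 2)|)
      (nhdsWithin c {c}ᶜ) atTop := by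
  set l : Filter ℝ := nhdsWithin c {c}ᶜ
  -- eventually the denominators are nonzero
  have hDc : c - 2 * c - c ^ 2 ≠ 0 := by
    intro h
    have : -(c * (1 + c)) = 0 := by linarith [h]
    rcases mul_eq_zero.1 (neg_eq_zero.1 this) with h1 | h2
    · exact hc0 h1
    · exact hc1 (by linarith)
  have hcont : ContinuousAt (fun h : ℝ => c - 2 * h - h ^ 2) c := by fun_prop
  have hevD : ∀ᶠ h in l, c - 2 * h - h ^ 2 ≠ 0 := by
    have : ∀ᶠ h in nhds c, c - 2 * h - h ^ 2 ≠ 0 :=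
      hcont.eventually_ne hDc
    exact this.filter_mono nhdsWithin_le_nhds
  have hevch : ∀ᶠ h in l, c - h ≠ 0 := by
    filter_upwards [self_mem_nhdsWithin] with h hh
    simpa [sub_ne_zero] using fun e => hh (e.symm)
  -- |TT c ·| → atTop
  have hnum : Tendsto (fun h : ℝ => |(h + 1) * (c - h - h ^ 2) - (c - h)|) l
      (nhds |(c + 1) * (c - c - c ^ 2) - (c - c)|) := by
    apply Tendsto.abs
    have : ContinuousAt (fun h : ℝ => (h + 1) * (c - h - h ^ 2) - (c - h)) c := by fun_prop
    exact this.continuousWithinAt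
  have hLpos : 0 < |(c + 1) * (c - c - c ^ 2) - (c - c)| := by
    rw [abs_pos]
    intro h
    have : -(c ^ 2 * (c + 1)) = 0 := by ring_nf; ring_nf at h; linarith
    rcases mul_eq_zero.1 (neg_eq_zero.1 this) with h1 | h2
    · exact hc0 (by nlinarith [sq_nonneg c])
    · exact hc1 (by linarith)
  have hinv : Tendsto (fun h : ℝ => |c - h|⁻¹) l atTop := by
    apply Filter.Tendsto.inv_tendsto_nhdsGT_zero
    rw [tendsto_nhdsWithin_iff]
    constructor
    · have h0 : Tendsto (fun h : ℝ => c - h) l (nhds (c - c)) := by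
        have : ContinuousAt (fun h : ℝ => c - h) c := by fun_prop
        exact (this.continuousWithinAt : ContinuousWithinAt _ {c}ᶜ c)
      have := h0.abs
      simpa using this
    · filter_upwards [hevch] with h hh
      exact abs_pos.2 hh
  have hT : Tendsto (fun h : ℝ => |TT c h|) l atTop := by
    have := hinv.atTop_mul_pos hLpos hnum
    apply this.congr'
    filter_upwards [hevch] with h hh
    rw [TT, abs_div, div_eq_inv_mul]
  -- |TT + 3h(h+1)| → atTop
  have hbdd : Tendsto (fun h : ℝ => |3 * (h * (h + 1))|) l (nhds |3 * (c * (c + 1))|) := by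
    apply Tendsto.abs
    have : ContinuousAt (fun h : ℝ => 3 * (h * (h + 1))) c := by fun_prop
    exact this.continuousWithinAt
  have hev_bdd : ∀ᶠ h in l, |3 * (h * (h + 1))| ≤ |3 * (c * (c + 1))| + 1 := by
    have := hbdd.eventually (eventually_le_nhds (by linarith : |3 * (c * (c + 1))| < |3 * (c * (c + 1))| + 1))
    exact this
  have hS : Tendsto (fun h : ℝ => |TT c h + 3 * (h * (h + 1))|) l atTop := by
    apply tendsto_atTop_mono' l (f₁ := fun h => |TT c h| - (|3 * (c * (c + 1))| + 1))
    · filter_upwards [hev_bdd] with h hh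
      have := abs_sub_abs_le_abs_sub (TT c h) (-(3 * (h * (h + 1))))
      simp only [sub_neg_eq_add, abs_neg] at this
      linarith [this]
    · exact tendsto_atTop_add_const_right l _ hT
  have hSq : Tendsto (fun h : ℝ => (TT c h + 3 * (h * (h + 1))) ^ 2) l atTop := by
    have h2 : Tendsto (fun h : ℝ => |TT c h + 3 * (h * (h + 1))| ^ 2) l atTop :=
      (tendsto_pow_atTop (two_ne_zero)).comp hS
    apply h2.congr
    intro h
    rw [sq_abs]
  have hNeg : Tendsto (fun h : ℝ => -(TT c h + 3 * (h * (h + 1))) ^ 2) l atBot :=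
    tendsto_neg_atTop_atBot.comp hSq
  have hRest : Tendsto (fun h : ℝ => 9 * (h * (h + 1)) ^ 2 - uF (c - h) h) l
      (nhds (9 * (c * (c + 1)) ^ 2 - uF (c - c) c)) := by
    have : ContinuousAt (fun h : ℝ => 9 * (h * (h + 1)) ^ 2 - uF (c - h) h) c := by
      unfold uF; fun_prop
    exact this.continuousWithinAt
  have hQ : Tendsto (fun h : ℝ =>
      -(TT c h + 3 * (h * (h + 1))) ^ 2 + (9 * (h * (h + 1)) ^ 2 - uF (c - h) h)) l atBot := by
    have := hRest.add_atBot hNeg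
    apply this.congr
    intro h
    ring
  have habs : Tendsto (fun h : ℝ =>
      |(-(TT c h + 3 * (h * (h + 1))) ^ 2 + (9 * (h * (h + 1)) ^ 2 - uF (c - h) h))|) l atTop :=
    tendsto_abs_atBot_atTop.comp hQ
  apply habs.congr'
  filter_upwards [hevD, hevch] with h hD hch
  rw [QF_on_curve c h hD hch]
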